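/- Let H be a graph and let G = (V,E) be a graph admitting an H-covering. If f is an H-magic vertex labeling of G with H-magic sum c and g is an H-magic edge labeling of G with H-magic sum c', then the map F defined by F(v) = f(v) for v ∈ V and F(e) = g(e) + |V| for e ∈ E is an H-supermagic labeling of G with H-supermagic sum c + c' + |E(H)|·|V|. -/

import Mathlib

/-- The grid graph `Grid(n 0, …, n (d-1))`: vertices are tuples whose `i`-th coordinate
ranges over a set of size `n i` (we use `Fin (n i) = {0, …, n i - 1}`, corresponding to the
coordinate `[n i] = {1, …, n i}` via `v ↦ v + 1`); two vertices are adjacent iff they differ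
by exactly one in one coordinate and agree in all others. -/
def gridGraph {d : ℕ} (n : Fin d → ℕ) : SimpleGraph (∀ i, Fin (n i)) where
  Adj x y := ∃ i, ((x i : ℕ) + 1 = (y i : ℕ) ∨ (y i : ℕ) + 1 = (x i : ℕ)) ∧
    ∀ j, j ≠ i → x j = y j
  symm := by
    constructor
    rintro x y ⟨i, h, hj⟩
    exact ⟨i, h.symm, fun j hji => (hj j hji).symm⟩
  loopless := by
    constructor
    rintro x ⟨i, h, -⟩
    rcases h with h | h <;> omega

/-- `f` is an `H`-magic vertex labeling of `G` with `H`-magic sum `c`: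
a bijection from the vertices of `G` onto `{1, …, |V|}` such that the vertex labels of every
subgraph of `G` isomorphic to `H` sum to `c`. -/
def IsMagicVertexLabeling {V : Type*} [Fintype V] {W : Type*}
    (G : SimpleGraph V) (H : SimpleGraph W) (f : V → ℤ) (c : ℤ) : Prop :=
  Set.BijOn f Set.univ (Set.Icc 1 (Fintype.card V : ℤ)) ∧
  ∀ G' : G.Subgraph, Nonempty (G'.coe ≃g H) → ∑ᶠ v ∈ G'.verts, f v = c

/-- `g` is an `H`-magic edge labeling of `G` with `H`-magic sum `c`:
a bijection from the edges of `G` onto `{1, …, |E|}` such that the edge labels of every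
subgraph of `G` isomorphic to `H` sum to `c`. -/
def IsMagicEdgeLabeling {V : Type*} [Fintype V] {W : Type*}
    (G : SimpleGraph V) (H : SimpleGraph W) (g : Sym2 V → ℤ) (c : ℤ) : Prop :=
  Set.BijOn g G.edgeSet (Set.Icc 1 (G.edgeSet.ncard : ℤ)) ∧
  ∀ G' : G.Subgraph, Nonempty (G'.coe ≃g H) → ∑ᶠ e ∈ G'.edgeSet, g e = c

/-- `G` admits an `H`-covering: every edge of `G` belongs to at least one subgraph of `G`
isomorphic to `H`. -/
def AdmitsCovering {V W : Type*} (G : SimpleGraph V) (H : SimpleGraph W) : Prop :=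
  ∀ e ∈ G.edgeSet, ∃ G' : G.Subgraph, e ∈ G'.edgeSet ∧ Nonempty (G'.coe ≃g H)

/-- `(Fv, Fe)` is an `H`-supermagic labeling of `G` with `H`-supermagic sum `c`:
the vertex part is a bijection onto `{1, …, |V|}`, the edge part is a bijection from the
edges onto `{|V|+1, …, |V|+|E|}` (together a bijection `V ∪ E → {1, …, |V|+|E|}` mapping `V`
onto `{1, …, |V|}`), and the labels of every subgraph isomorphic to `H` sum to `c`. -/
def IsSupermagicLabeling {V : Type*} [Fintype V] {W : Type*}
    (G : SimpleGraph V) (H : SimpleGraph W) (Fv : V → ℤ) (Fe : Sym2 V → ℤ) (c : ℤ) : Prop :=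
  Set.BijOn Fv Set.univ (Set.Icc 1 (Fintype.card V : ℤ)) ∧
  Set.BijOn Fe G.edgeSet
    (Set.Icc ((Fintype.card V : ℤ) + 1) ((Fintype.card V : ℤ) + (G.edgeSet.ncard : ℤ))) ∧
  ∀ G' : G.Subgraph, Nonempty (G'.coe ≃g H) →
    (∑ᶠ v ∈ G'.verts, Fv v) + (∑ᶠ e ∈ G'.edgeSet, Fe e) = c

/-- `G` is `H`-supermagic with `H`-supermagic sum `c`. -/
def IsSupermagic {V : Type*} [Fintype V] {W : Type*}
    (G : SimpleGraph V) (H : SimpleGraph W) (c : ℤ) : Prop :=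
  AdmitsCovering G H ∧ ∃ Fv Fe, IsSupermagicLabeling G H Fv Fe c

/-- If `G` admits an `H`-covering, `f` is an `H`-magic vertex labeling of `G`
with sum `c` and `g` is an `H`-magic edge labeling of `G` with sum `c'`, then `F` defined by
`F(v) = f(v)` on vertices and `F(e) = g(e) + |V|` on edges is an `H`-supermagic labeling of
`G` with `H`-supermagic sum `c + c' + |E(H)|·|V|`. -/
theorem combine_magic_labelings {V W : Type*} [Fintype V]
    (G : SimpleGraph V) (H : SimpleGraph W) (hcov : AdmitsCovering G H)
    (f : V → ℤ) (c : ℤ) (hf : IsMagicVertexLabeling G H f c)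
    (g : Sym2 V → ℤ) (c' : ℤ) (hg : IsMagicEdgeLabeling G H g c') :
    IsSupermagicLabeling G H f (fun e => g e + (Fintype.card V : ℤ))
      (c + c' + (H.edgeSet.ncard : ℤ) * (Fintype.card V : ℤ)) := by
  classical
  obtain ⟨hgbij, hgsum⟩ := hg
  refine ⟨hf.1, ⟨?_, ?_, ?_⟩, ?_⟩
  · intro e he
    have := hgbij.1 he
    simp only [Set.mem_Icc] at this ⊢
    omega
  · intro a ha b hb hab
    simp only [add_left_inj] at hab
    exact hgbij.2.1 ha hb hab
  · intro y hy
    simp only [Set.mem_Icc] at hy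
    obtain ⟨e, he, hge⟩ := hgbij.2.2 (show y - (Fintype.card V : ℤ) ∈ _ by
      simp only [Set.mem_Icc]; omega)
    exact ⟨e, he, by simp [hge]⟩
  · intro G' hiso
    have hfin : G'.edgeSet.Finite := Set.toFinite _
    have hcard : G'.edgeSet.ncard = H.edgeSet.ncard := by
      rw [← Nat.card_coe_set_eq, ← Nat.card_coe_set_eq]
      have e1 : G'.coe.edgeSet ≃ H.edgeSet :=
        (Classical.choice hiso).mapEdgeSet
      have e2 : G'.coe.edgeSet ≃ G'.edgeSet := by
        refine Equiv.ofBijective (fun e => ⟨Sym2.map Subtype.val e.1, ?_⟩) ⟨?_, ?_⟩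
        · have := e.2
          simp only [SimpleGraph.Subgraph.edgeSet_coe, Set.mem_preimage] at this
          exact this
        · intro a b hab
          have := congrArg Subtype.val hab
          exact Subtype.ext (Sym2.map.injective Subtype.val_injective this)
        · rintro ⟨y, hy⟩
          rw [← SimpleGraph.Subgraph.image_coe_edgeSet_coe] at hy
          obtain ⟨x, hx, hxy⟩ := hy
          exact ⟨⟨x, hx⟩, Subtype.ext hxy⟩
      exact Nat.card_congr (e2.symm.trans e1)
    have hsplit : ∑ᶠ e ∈ G'.edgeSet, (g e + (Fintype.card V : ℤ)) =
        (∑ᶠ e ∈ G'.edgeSet, g e) + (G'.edgeSet.ncard : ℤ) * (Fintype.card V : ℤ) := by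
      rw [← hfin.coe_toFinset, finsum_mem_coe_finset, finsum_mem_coe_finset,
        Finset.sum_add_distrib, Finset.sum_const, nsmul_eq_mul,
        Set.ncard_eq_toFinset_card']
      simp
    rw [hsplit, hf.2 G' hiso, hgsum G' hiso, hcard]
    ring
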